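/- Let f : ℕ → ℝ≥0 and suppose there exist L ≥ 1 and σ > 2 such that defining F(ℓ) := ∑_{k=ℓ-L}^{ℓ+L} k f(k), one has σ F(ℓ) ≤ F(ℓ+L) + F(ℓ-L) for all L ≤ ℓ ≤ M, and ∑_k f(k) = 1, k f(k) ≤ N for all k. Then there exist C, ε' > 0 (depending on σ, L but not on N, M) such that F(ℓL) ≤ C e^{-ε'ℓ} + N(σ-1)^{-M/(2L)} for all 1 ≤ ℓ ≤ M/(2L). -/

import Mathlib

open Finset

private lemma geom_aux {ρ : ℝ} (h0 : 0 < ρ) (h1 : ρ < 1) (k : ℕ) :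
    (k : ℝ) * ρ ^ k ≤ 1 / (1 - ρ) := by
  have h1' : 0 < 1 - ρ := by linarith
  have hsum : ∑ i ∈ range k, ρ ^ i ≤ 1 / (1 - ρ) := by
    rw [le_div_iff₀ h1']
    have hg := geom_sum_mul ρ k
    have : (0:ℝ) < ρ ^ k := pow_pos h0 k
    nlinarith
  have hterm : (k : ℝ) * ρ ^ k = ∑ _i ∈ range k, ρ ^ k := by
    rw [Finset.sum_const, card_range, nsmul_eq_mul]
  rw [hterm]
  refine le_trans (Finset.sum_le_sum ?_) hsum
  intro i hi
  exact pow_le_pow_of_le_one h0.le h1.le (le_of_lt (mem_range.mp hi))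

private lemma maxprin (σ lam : ℝ) (hσ : 2 < σ) (hlam0 : 0 < lam)
    (hquad : lam * lam + 1 = σ * lam) (m : ℕ) (a : ℕ → ℝ)
    (ha0 : ∀ j, 0 ≤ a j)
    (hrec : ∀ j, 1 ≤ j → j ≤ m → σ * a j ≤ a (j + 1) + a (j - 1)) :
    ∀ j, j ≤ m → a j ≤ lam ^ j * a 0 + lam ^ (m - j) * a m := by
  set d : ℕ → ℝ := fun j => a j - (lam ^ j * a 0 + lam ^ (m - j) * a m) with hd
  obtain ⟨j₀, hj₀m, hmax⟩ := Finset.exists_max_image (Finset.Icc 0 m) d ⟨0, by simp⟩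
  have hj₀ : j₀ ≤ m := (Finset.mem_Icc.mp hj₀m).2
  have key : d j₀ ≤ 0 := by
    rcases eq_or_ne j₀ 0 with h0 | h0
    · have h : 0 ≤ lam ^ m * a m := mul_nonneg (pow_nonneg hlam0.le m) (ha0 m)
      simp only [hd, h0, pow_zero, one_mul, Nat.sub_zero]
      linarith
    rcases eq_or_ne j₀ m with hm | hm
    · have h : 0 ≤ lam ^ m * a 0 := mul_nonneg (pow_nonneg hlam0.le m) (ha0 0)
      simp only [hd, hm, Nat.sub_self, pow_zero, one_mul]
      linarith
    · have hj1 : 1 ≤ j₀ := Nat.one_le_iff_ne_zero.mpr h0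
      obtain ⟨i, rfl⟩ : ∃ i, j₀ = i + 1 := ⟨j₀ - 1, by omega⟩
      have hjm : i + 2 ≤ m := by omega
      set t := m - (i + 2) with htdef
      have f1 : m - (i + 1) = t + 1 := by omega
      have f2 : m - (i + 2) = t := by omega
      have f3 : m - i = t + 2 := by omega
      have hd1 : d (i + 1) = a (i + 1) - (lam ^ (i+1) * a 0 + lam ^ (t+1) * a m) := by
        simp only [hd, f1]
      have hd2 : d (i + 2) = a (i + 2) - (lam ^ (i+2) * a 0 + lam ^ t * a m) := by
        simp only [hd, f2]
      have hd3 : d i = a i - (lam ^ i * a 0 + lam ^ (t+2) * a m) := by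
        simp only [hd, f3]
      have hrec' := hrec (i + 1) (by omega) (by omega)
      simp only [Nat.add_sub_cancel] at hrec'
      have hH : σ * (lam ^ (i+1) * a 0 + lam ^ (t+1) * a m)
          = (lam ^ (i+2) * a 0 + lam ^ t * a m) + (lam ^ i * a 0 + lam ^ (t+2) * a m) := by
        linear_combination (-(lam ^ i * a 0 + lam ^ t * a m)) * hquad
      have step : σ * d (i + 1) ≤ d (i + 2) + d i := by
        rw [hd1, hd2, hd3]
        have expand : σ * (a (i + 1) - (lam ^ (i+1) * a 0 + lam ^ (t+1) * a m))
            = σ * a (i + 1) - σ * (lam ^ (i+1) * a 0 + lam ^ (t+1) * a m) := by ring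
        rw [expand, hH]
        linarith
      have hmax1 : d (i + 2) ≤ d (i + 1) := hmax _ (Finset.mem_Icc.mpr ⟨Nat.zero_le _, by omega⟩)
      have hmax2 : d i ≤ d (i + 1) := hmax _ (Finset.mem_Icc.mpr ⟨Nat.zero_le _, by omega⟩)
      nlinarith [step, hmax1, hmax2]
  intro j hj
  have := hmax j (Finset.mem_Icc.mpr ⟨Nat.zero_le _, hj⟩)
  have hdj : d j ≤ 0 := le_trans this key
  simp only [hd] at hdj
  linarith

theorem stmt14 (σ : ℝ) (L : ℕ) (hσ : 2 < σ) (hL : 1 ≤ L) :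
    ∃ C ε' : ℝ, 0 < C ∧ 0 < ε' ∧
      ∀ (N : ℝ) (M : ℕ) (f : ℕ → ℝ),
        (∀ k, 0 ≤ f k) → Summable f → (∑' k, f k) = 1 →
        (∀ k : ℕ, (k : ℝ) * f k ≤ N) →
        (∀ ℓ, L ≤ ℓ → ℓ ≤ M →
          σ * (∑ k ∈ Finset.Icc (ℓ - L) (ℓ + L), (k : ℝ) * f k)
            ≤ (∑ k ∈ Finset.Icc (ℓ + L - L) (ℓ + L + L), (k : ℝ) * f k)
              + (∑ k ∈ Finset.Icc (ℓ - L - L) (ℓ - L + L), (k : ℝ) * f k)) →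
        ∀ ℓ, 1 ≤ ℓ → ℓ ≤ M / (2 * L) →
          (∑ k ∈ Finset.Icc (ℓ * L - L) (ℓ * L + L), (k : ℝ) * f k)
            ≤ C * Real.exp (-(ε' * ℓ)) + N * (σ - 1) ^ (-((M : ℝ) / (2 * L))) := by
  have hσ0 : (0:ℝ) < σ := by linarith
  have hs2 : Real.sqrt (σ^2 - 4) ^ 2 = σ^2 - 4 := Real.sq_sqrt (by nlinarith)
  set s := Real.sqrt (σ^2 - 4) with hsdef
  have hs0 : 0 ≤ s := Real.sqrt_nonneg _
  set lam : ℝ := (σ - s) / 2 with hlamdef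
  have hlam0 : 0 < lam := by
    have : s < σ := by nlinarith
    simp only [hlamdef]; linarith
  have hlam1 : lam < 1 := by
    have : σ - 2 < s := by nlinarith
    simp only [hlamdef]; linarith
  have hquad : lam * lam + 1 = σ * lam := by
    simp only [hlamdef]
    linear_combination hs2 / 4
  set ρ : ℝ := Real.sqrt lam with hρdef
  have hρ0 : 0 < ρ := Real.sqrt_pos.mpr hlam0
  have hρ2 : ρ ^ 2 = lam := Real.sq_sqrt hlam0.le
  have hρ1 : ρ < 1 := by nlinarith
  have h1ρ : 0 < 1 - ρ := by linarith
  have hL1 : (1:ℝ) ≤ (L:ℝ) := by exact_mod_cast hL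
  refine ⟨(L:ℝ) * (3 + 2 / (1 - ρ)), -Real.log ρ, ?_, ?_, ?_⟩
  · have : 0 < 2 / (1 - ρ) := by positivity
    nlinarith
  · have := Real.log_neg hρ0 hρ1
    linarith
  intro N M f hf hsumm htsum hN hrec ℓ hℓ1 hℓ2
  have hL' : 0 < L := hL
  set m := M / L with hmdef
  set a : ℕ → ℝ := fun j => ∑ k ∈ Finset.Icc (j*L - L) (j*L + L), (k:ℝ) * f k with ha
  have ha0 : ∀ j, 0 ≤ a j := by
    intro j
    apply Finset.sum_nonneg
    intro k _
    exact mul_nonneg (Nat.cast_nonneg k) (hf k)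
  have hrecA : ∀ j, 1 ≤ j → j ≤ m → σ * a j ≤ a (j + 1) + a (j - 1) := by
    intro j h1 h2
    have hjL : j * L ≤ M := (Nat.le_div_iff_mul_le hL').mp h2
    have hLj : L ≤ j * L := by
      calc L = 1 * L := (one_mul L).symm
      _ ≤ j * L := Nat.mul_le_mul_right L h1
    have h := hrec (j*L) hLj hjL
    have e1 : (j+1)*L = j*L + L := by rw [add_mul, one_mul]
    have e2 : (j-1)*L = j*L - L := by rw [Nat.sub_mul, one_mul]
    simp only [ha]
    rw [e1, e2]
    exact h
  -- window sum bounds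
  have hsum_le : ∀ (n : ℕ), a n ≤ ((n:ℝ) + 1) * L := by
    intro n
    have hstep : a n ≤ ∑ k ∈ Finset.Icc (n*L - L) (n*L + L), (((n:ℝ)+1) * L) * f k := by
      apply Finset.sum_le_sum
      intro k hk
      have hk' : k ≤ n * L + L := (Finset.mem_Icc.mp hk).2
      have : (k:ℝ) ≤ ((n:ℝ)+1) * L := by
        have : (k:ℝ) ≤ ((n*L + L : ℕ) : ℝ) := by exact_mod_cast hk'
        calc (k:ℝ) ≤ ((n*L + L : ℕ) : ℝ) := this
        _ = ((n:ℝ)+1) * L := by push_cast; ring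
      exact mul_le_mul_of_nonneg_right this (hf k)
    have hfsum : ∑ k ∈ Finset.Icc (n*L - L) (n*L + L), f k ≤ 1 := by
      rw [← htsum]
      exact Summable.sum_le_tsum _ (fun k _ => hf k) hsumm
    have hc : (0:ℝ) ≤ ((n:ℝ)+1) * L := by positivity
    calc a n ≤ ∑ k ∈ Finset.Icc (n*L - L) (n*L + L), (((n:ℝ)+1) * L) * f k := hstep
    _ = (((n:ℝ)+1) * L) * ∑ k ∈ Finset.Icc (n*L - L) (n*L + L), f k := by
        rw [Finset.mul_sum]
    _ ≤ (((n:ℝ)+1) * L) * 1 := mul_le_mul_of_nonneg_left hfsum hc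
    _ = ((n:ℝ)+1) * L := by ring
  have ha0' : a 0 ≤ (L:ℝ) := by
    have := hsum_le 0
    simpa using this
  have ham : a m ≤ ((m:ℝ) + 1) * L := hsum_le m
  -- index arithmetic
  have hdiv : M / (2*L) = m / 2 := by
    rw [hmdef, Nat.div_div_eq_div_mul, mul_comm]
  rw [hdiv] at hℓ2
  have hk2 : 2 * (m/2) ≤ m := by omega
  have hℓm : ℓ ≤ m := by omega
  set k0 := m / 2 with hk0def
  have hexp1 : ℓ + k0 ≤ 2 * (m - ℓ) := by omega
  have hmain := maxprin σ lam hσ hlam0 hquad m a ha0 hrecA ℓ hℓm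
  -- convert lam powers to ρ powers
  have hlampow : ∀ n : ℕ, lam ^ n = ρ ^ (2 * n) := by
    intro n
    rw [pow_mul, hρ2]
  have hb1 : lam ^ ℓ * a 0 ≤ ρ ^ ℓ * L := by
    have h1 : lam ^ ℓ ≤ ρ ^ ℓ := by
      rw [hlampow]
      exact pow_le_pow_of_le_one hρ0.le hρ1.le (by omega)
    have := mul_le_mul h1 ha0' (ha0 0) (pow_nonneg hρ0.le ℓ)
    linarith
  have hb2 : lam ^ (m - ℓ) * a m ≤ ρ ^ ℓ * ((2 + 2/(1-ρ)) * L) := by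
    have h1 : lam ^ (m - ℓ) ≤ ρ ^ (ℓ + k0) := by
      rw [hlampow]
      exact pow_le_pow_of_le_one hρ0.le hρ1.le hexp1
    have h2 : lam ^ (m - ℓ) * a m ≤ ρ ^ (ℓ + k0) * (((m:ℝ)+1) * L) := by
      apply mul_le_mul h1 ham (ha0 m)
      exact pow_nonneg hρ0.le _
    have h3 : ρ ^ (ℓ + k0) * (((m:ℝ)+1) * L) ≤ ρ ^ ℓ * ((2 + 2/(1-ρ)) * L) := by
      rw [pow_add]
      have hm1 : (m:ℝ) + 1 ≤ 2 * (k0:ℝ) + 2 := by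
        have : m ≤ 2 * k0 + 1 := by omega
        have := (Nat.cast_le (α := ℝ)).mpr this
        push_cast at this ⊢
        linarith
      have hpk : ρ ^ k0 * ((m:ℝ) + 1) ≤ 2 + 2/(1-ρ) := by
        have g1 : ρ ^ k0 ≤ 1 := pow_le_one₀ hρ0.le hρ1.le
        have g2 : (k0:ℝ) * ρ ^ k0 ≤ 1 / (1-ρ) := geom_aux hρ0 hρ1 k0
        have g3 : ρ ^ k0 * ((m:ℝ)+1) ≤ ρ ^ k0 * (2 * (k0:ℝ) + 2) :=
          mul_le_mul_of_nonneg_left hm1 (pow_nonneg hρ0.le _)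
        have g4 : ρ ^ k0 * (2 * (k0:ℝ) + 2) = 2*((k0:ℝ) * ρ^k0) + 2*ρ^k0 := by ring
        rw [g4] at g3
        have g5 : 2/(1-ρ) = 2*(1/(1-ρ)) := by ring
        rw [g5]
        linarith
      calc ρ ^ ℓ * ρ ^ k0 * (((m:ℝ)+1) * L)
          = ρ ^ ℓ * ((ρ ^ k0 * ((m:ℝ)+1)) * L) := by ring
      _ ≤ ρ ^ ℓ * ((2 + 2/(1-ρ)) * L) := by
          apply mul_le_mul_of_nonneg_left _ (pow_nonneg hρ0.le ℓ)
          apply mul_le_mul_of_nonneg_right hpk (by positivity)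
    linarith
  have hexp : Real.exp (-(-Real.log ρ * ℓ)) = ρ ^ ℓ := by
    have e : -(-Real.log ρ * (ℓ:ℝ)) = (ℓ:ℝ) * Real.log ρ := by ring
    rw [e, Real.exp_nat_mul, Real.exp_log hρ0]
  have hNterm : 0 ≤ N * (σ - 1) ^ (-((M : ℝ) / (2 * L))) := by
    have hN0 : 0 ≤ N := by
      have := hN 0
      simpa using this
    have : (0:ℝ) < (σ - 1) ^ (-((M : ℝ) / (2 * L))) :=
      Real.rpow_pos_of_pos (by linarith) _
    positivity
  have final : a ℓ ≤ (L:ℝ) * (3 + 2/(1-ρ)) * ρ ^ ℓ := by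
    calc a ℓ ≤ lam ^ ℓ * a 0 + lam ^ (m - ℓ) * a m := hmain
    _ ≤ ρ ^ ℓ * L + ρ ^ ℓ * ((2 + 2/(1-ρ)) * L) := by linarith
    _ = (L:ℝ) * (3 + 2/(1-ρ)) * ρ ^ ℓ := by ring
  show a ℓ ≤ (L:ℝ) * (3 + 2 / (1 - ρ)) * Real.exp (-(-Real.log ρ * ℓ)) + N * (σ - 1) ^ (-((M : ℝ) / (2 * L)))
  rw [hexp]
  linarith
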